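/- The function V(A,B,C) = Λ(A) + Λ(B) + Λ(C) on the set {(A,B,C) : A,B,C > 0, A+B+C = π}, where Λ is the Lobachevsky function, is strictly concave, and its unique maximum on this set occurs at A = B = C = π/3. -/

import Mathlib

open Real

open MeasureTheory Set intervalIntegral

/-- The Lobachevsky function `Λ(α) = -∫₀^α ln(2|sin t|) dt`. -/
noncomputable def lobachevsky (α : ℝ) : ℝ := -∫ t in (0:ℝ)..α, Real.log (2 * |Real.sin t|)

lemma lob_integrable {α : ℝ} (h0 : 0 ≤ α) (hπ : α < π) :
    IntervalIntegrable (fun t => Real.log (2 * |Real.sin t|)) volume 0 α := by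
  rcases eq_or_lt_of_le h0 with rfl | h0
  · simp
  set c : ℝ := Real.sin α / α with hc
  have hsα : 0 < Real.sin α := Real.sin_pos_of_pos_of_lt_pi h0 hπ
  have hcpos : 0 < c := div_pos hsα h0
  set K : ℝ := Real.log 2 + |Real.log c| + π with hK
  have hg : IntervalIntegrable (fun t : ℝ => K + 2 * t ^ (-(1:ℝ)/2)) volume 0 α :=
    (intervalIntegrable_const (c := K)).add
      ((intervalIntegrable_rpow' (by norm_num)).const_mul 2)
  apply hg.mono_fun'
  · exact ((Real.measurable_log.comp
      ((measurable_const.mul measurable_sin.abs))).aestronglyMeasurable)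
  · rw [Filter.EventuallyLE, ae_restrict_iff' measurableSet_uIoc]
    refine Filter.Eventually.of_forall fun t ht => ?_
    rw [uIoc_of_le h0.le] at ht
    obtain ⟨ht0, htα⟩ := ht
    have htπ : t < π := lt_of_le_of_lt htα hπ
    have hst : 0 < Real.sin t := Real.sin_pos_of_pos_of_lt_pi ht0 htπ
    -- concavity: sin t ≥ (t/α) sin α = c * t
    have hta : (0:ℝ) ≤ t / α := by positivity
    have htb : (0:ℝ) ≤ 1 - t / α := by
      have : t / α ≤ 1 := (div_le_one h0).2 htα
      linarith
    have hconc : c * t ≤ Real.sin t := by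
      have h := strictConcaveOn_sin_Icc.concaveOn.2 (mem_Icc.2 ⟨h0.le, hπ.le⟩)
        (mem_Icc.2 ⟨le_refl (0:ℝ), pi_pos.le⟩) hta htb (by ring)
      simp only [smul_eq_mul, Real.sin_zero, mul_zero, add_zero] at h
      calc c * t = t / α * Real.sin α := by rw [hc]; field_simp
        _ ≤ Real.sin (t / α * α) := h
        _ = Real.sin t := by rw [div_mul_cancel₀ _ h0.ne']
    have habs : |Real.sin t| = Real.sin t := abs_of_pos hst
    rw [habs]
    have hct : 0 < c * t := mul_pos hcpos ht0
    have h2st : 0 < 2 * Real.sin t := by linarith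
    have hrpow : (0:ℝ) < t ^ (-(1:ℝ)/2) := Real.rpow_pos_of_pos ht0 _
    have hnlog : -Real.log t ≤ 2 * t ^ (-(1:ℝ)/2) + π := by
      rcases le_or_gt t 1 with h1 | h1
      · have : Real.log (t ^ (-(1:ℝ)/2)) = (-(1:ℝ)/2) * Real.log t :=
          Real.log_rpow ht0 _
        have hle : Real.log (t ^ (-(1:ℝ)/2)) ≤ t ^ (-(1:ℝ)/2) := by
          have := Real.log_le_sub_one_of_pos hrpow
          linarith
        nlinarith [pi_pos]
      · have : 0 ≤ Real.log t := Real.log_nonneg h1.le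
        nlinarith [pi_pos]
    rw [Real.norm_eq_abs, abs_le]
    constructor
    · -- lower bound: log(2 sin t) ≥ log(2 c t)
      have hlb : Real.log (2 * (c * t)) ≤ Real.log (2 * Real.sin t) :=
        Real.log_le_log (by linarith) (by linarith)
      have hexp : Real.log (2 * (c * t)) = Real.log 2 + Real.log c + Real.log t := by
        rw [Real.log_mul (by norm_num) hct.ne', Real.log_mul hcpos.ne' ht0.ne']
        ring
      have : -Real.log c ≤ |Real.log c| := neg_le_abs _
      have hlog2 : (0:ℝ) ≤ Real.log 2 := Real.log_nonneg (by norm_num)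
      nlinarith
    · have hub : Real.log (2 * Real.sin t) ≤ Real.log 2 := by
        have h2 : 2 * Real.sin t ≤ 2 := by nlinarith [Real.sin_le_one t]
        have := Real.log_le_log (show (0:ℝ) < 2 * Real.sin t from h2st) h2
        linarith
      have : (0:ℝ) ≤ |Real.log c| := abs_nonneg _
      nlinarith [pi_pos]

lemma hasDerivAt_lobachevsky {α : ℝ} (h0 : 0 < α) (hπ : α < π) :
    HasDerivAt lobachevsky (-Real.log (2 * Real.sin α)) α := by
  have hint := lob_integrable h0.le hπ
  have hsα : 0 < Real.sin α := Real.sin_pos_of_pos_of_lt_pi h0 hπ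
  have hmeas : StronglyMeasurableAtFilter (fun t => Real.log (2 * |Real.sin t|)) (nhds α) :=
    ((Real.measurable_log.comp
      (measurable_const.mul measurable_sin.abs)).stronglyMeasurable).stronglyMeasurableAtFilter
  have hcont : ContinuousAt (fun t => Real.log (2 * |Real.sin t|)) α := by
    apply ContinuousAt.log
    · exact (continuous_const.mul continuous_sin.abs).continuousAt
    · have : 0 < 2 * |Real.sin α| := by rw [abs_of_pos hsα]; linarith
      exact this.ne'
  have h := (intervalIntegral.integral_hasDerivAt_right hint hmeas hcont).neg
  have : Real.log (2 * |Real.sin α|) = Real.log (2 * Real.sin α) := by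
    rw [abs_of_pos hsα]
  rw [this] at h
  exact h

lemma hasDerivAt_neglog2sin {α : ℝ} (h0 : 0 < α) (hπ : α < π) :
    HasDerivAt (fun a => -Real.log (2 * Real.sin a)) (-(Real.cos α / Real.sin α)) α := by
  have hsα : 0 < Real.sin α := Real.sin_pos_of_pos_of_lt_pi h0 hπ
  have h1 : HasDerivAt (fun a : ℝ => 2 * Real.sin a) (2 * Real.cos α) α :=
    (Real.hasDerivAt_sin α).const_mul 2
  have h2 : HasDerivAt (fun a => -Real.log (2 * Real.sin a)) (-(2 * Real.cos α / (2 * Real.sin α))) α :=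
    (h1.log (by positivity)).neg
  convert h2 using 1
  ring

lemma cot_quad {A B C a b c : ℝ} (hA0 : 0 < A) (hAπ : A < π) (hB0 : 0 < B) (hBπ : B < π)
    (hC0 : 0 < C) (hCπ : C < π) (hABC : A + B + C = π) (habc : a + b + c = 0)
    (hne : ¬(a = 0 ∧ b = 0 ∧ c = 0)) :
    0 < Real.cos A / Real.sin A * a ^ 2 + Real.cos B / Real.sin B * b ^ 2
      + Real.cos C / Real.sin C * c ^ 2 := by
  have hsa : 0 < Real.sin A := Real.sin_pos_of_pos_of_lt_pi hA0 hAπ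
  have hsb : 0 < Real.sin B := Real.sin_pos_of_pos_of_lt_pi hB0 hBπ
  have hsc : 0 < Real.sin C := Real.sin_pos_of_pos_of_lt_pi hC0 hCπ
  set u := Real.cos A / Real.sin A with hu
  set v := Real.cos B / Real.sin B with hv
  set w := Real.cos C / Real.sin C with hw
  have e1 : Real.sin C = Real.sin A * Real.cos B + Real.cos A * Real.sin B := by
    rw [show C = π - (A + B) by linarith, Real.sin_pi_sub, Real.sin_add]
  have e2 : Real.cos C = -(Real.cos A * Real.cos B - Real.sin A * Real.sin B) := by
    rw [show C = π - (A + B) by linarith, Real.cos_pi_sub, Real.cos_add]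
  have e3 : Real.sin B = Real.sin A * Real.cos C + Real.cos A * Real.sin C := by
    rw [show B = π - (A + C) by linarith, Real.sin_pi_sub, Real.sin_add]
  have hP : 0 < u + w := by
    have : u + w = Real.sin B / (Real.sin A * Real.sin C) := by
      rw [hu, hw, div_add_div _ _ hsa.ne' hsc.ne', e3]
      ring_nf
    rw [this]; positivity
  have key0 : Real.cos A * Real.cos B + Real.cos C = Real.sin A * Real.sin B := by
    rw [e2]; ring
  have hkey : (u + w) * (v + w) - w ^ 2 = 1 := by
    have h1 : (u + w) * (v + w) - w ^ 2 = u * v + (u + v) * w := by ring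
    rw [h1, hu, hv, hw]
    field_simp
    linear_combination Real.sin C * key0 - Real.cos C * e1
  have hc : c = -a - b := by linarith
  subst hc
  have hq : (u + w) * (u * a ^ 2 + v * b ^ 2 + w * (-a - b) ^ 2)
      = ((u + w) * a + w * b) ^ 2 + b ^ 2 := by
    linear_combination b ^ 2 * hkey
  have h2 : 0 < ((u + w) * a + w * b) ^ 2 + b ^ 2 := by
    rcases eq_or_ne b 0 with rfl | hb
    · have ha : a ≠ 0 := by
        rintro rfl
        exact hne ⟨rfl, rfl, by ring⟩
      have h3 : (u + w) * a + w * 0 ≠ 0 := by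
        rw [mul_zero, add_zero]; exact mul_ne_zero hP.ne' ha
      positivity
    · positivity
  by_contra h
  push_neg at h
  nlinarith [mul_nonneg hP.le (neg_nonneg.2 h)]

lemma combo_pos {x y a b : ℝ} (hx : 0 < x) (hy : 0 < y) (ha : 0 ≤ a) (hb : 0 ≤ b)
    (hab : a + b = 1) : 0 < a * x + b * y := by
  rcases ha.eq_or_lt with rfl | ha'
  · rw [zero_mul, zero_add]; nlinarith
  · nlinarith [mul_nonneg hb hy.le]

lemma simplex_convex : Convex ℝ
    {p : ℝ × ℝ × ℝ | 0 < p.1 ∧ 0 < p.2.1 ∧ 0 < p.2.2 ∧ p.1 + p.2.1 + p.2.2 = π} := by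
  intro x hx y hy a b ha hb hab
  obtain ⟨hx1, hx2, hx3, hxs⟩ := hx
  obtain ⟨hy1, hy2, hy3, hys⟩ := hy
  simp only [Set.mem_setOf_eq, Prod.fst_add, Prod.snd_add, Prod.smul_fst, Prod.smul_snd,
    smul_eq_mul]
  refine ⟨combo_pos hx1 hy1 ha hb hab, combo_pos hx2 hy2 ha hb hab,
    combo_pos hx3 hy3 ha hb hab, ?_⟩
  linear_combination a * hxs + b * hys + π * hab

lemma strictConcaveOn_V : StrictConcaveOn ℝ
    {p : ℝ × ℝ × ℝ | 0 < p.1 ∧ 0 < p.2.1 ∧ 0 < p.2.2 ∧ p.1 + p.2.1 + p.2.2 = π}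
    (fun p => lobachevsky p.1 + lobachevsky p.2.1 + lobachevsky p.2.2) := by
  constructor
  · exact simplex_convex
  intro x hx y hy hxy a b ha hb hab
  obtain ⟨hx1, hx2, hx3, hxs⟩ := hx
  obtain ⟨hy1, hy2, hy3, hys⟩ := hy
  have hx1π : x.1 < π := by linarith
  have hx2π : x.2.1 < π := by linarith
  have hx3π : x.2.2 < π := by linarith
  have hy1π : y.1 < π := by linarith
  have hy2π : y.2.1 < π := by linarith
  have hy3π : y.2.2 < π := by linarith
  set d1 := x.1 - y.1 with hd1
  set d2 := x.2.1 - y.2.1 with hd2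
  set d3 := x.2.2 - y.2.2 with hd3
  set g : ℝ → ℝ := fun s => lobachevsky (y.1 + s * d1) + lobachevsky (y.2.1 + s * d2)
    + lobachevsky (y.2.2 + s * d3) with hgdef
  set g1 : ℝ → ℝ := fun s => -Real.log (2 * Real.sin (y.1 + s * d1)) * d1
    + -Real.log (2 * Real.sin (y.2.1 + s * d2)) * d2
    + -Real.log (2 * Real.sin (y.2.2 + s * d3)) * d3 with hg1def
  set q : ℝ → ℝ := fun s => -(Real.cos (y.1 + s * d1) / Real.sin (y.1 + s * d1)) * d1 * d1
    + -(Real.cos (y.2.1 + s * d2) / Real.sin (y.2.1 + s * d2)) * d2 * d2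
    + -(Real.cos (y.2.2 + s * d3) / Real.sin (y.2.2 + s * d3)) * d3 * d3 with hqdef
  have hm : ∀ s ∈ Icc (0:ℝ) 1, ∀ u v : ℝ, 0 < u → u < π → 0 < v → v < π →
      0 < u + s * (v - u) ∧ u + s * (v - u) < π := by
    rintro s ⟨hs0, hs1⟩ u v hu0 huπ hv0 hvπ
    have hs0' : (0:ℝ) ≤ 1 - s := by linarith
    have h1 := combo_pos hu0 hv0 hs0' hs0 (by ring)
    have h2 := combo_pos (show (0:ℝ) < π - u by linarith) (show (0:ℝ) < π - v by linarith)
      hs0' hs0 (by ring)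
    constructor <;> nlinarith
  have hmem1 : ∀ s ∈ Icc (0:ℝ) 1, 0 < y.1 + s * d1 ∧ y.1 + s * d1 < π :=
    fun s hs => hm s hs _ _ hy1 hy1π hx1 hx1π
  have hmem2 : ∀ s ∈ Icc (0:ℝ) 1, 0 < y.2.1 + s * d2 ∧ y.2.1 + s * d2 < π :=
    fun s hs => hm s hs _ _ hy2 hy2π hx2 hx2π
  have hmem3 : ∀ s ∈ Icc (0:ℝ) 1, 0 < y.2.2 + s * d3 ∧ y.2.2 + s * d3 < π :=
    fun s hs => hm s hs _ _ hy3 hy3π hx3 hx3π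
  have haff : ∀ (s c d : ℝ), HasDerivAt (fun s : ℝ => c + s * d) d s := by
    intro s c d
    simpa using ((hasDerivAt_id s).mul_const d).const_add c
  have hg' : ∀ s ∈ Icc (0:ℝ) 1, HasDerivAt g (g1 s) s := by
    intro s hs
    obtain ⟨h10, h1π⟩ := hmem1 s hs
    obtain ⟨h20, h2π⟩ := hmem2 s hs
    obtain ⟨h30, h3π⟩ := hmem3 s hs
    exact (((hasDerivAt_lobachevsky h10 h1π).comp s (haff s _ _)).add
      ((hasDerivAt_lobachevsky h20 h2π).comp s (haff s _ _))).add
      ((hasDerivAt_lobachevsky h30 h3π).comp s (haff s _ _))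
  have hg1' : ∀ s ∈ Icc (0:ℝ) 1, HasDerivAt g1 (q s) s := by
    intro s hs
    obtain ⟨h10, h1π⟩ := hmem1 s hs
    obtain ⟨h20, h2π⟩ := hmem2 s hs
    obtain ⟨h30, h3π⟩ := hmem3 s hs
    exact ((((hasDerivAt_neglog2sin h10 h1π).comp s (haff s _ _)).mul_const d1).add
      (((hasDerivAt_neglog2sin h20 h2π).comp s (haff s _ _)).mul_const d2)).add
      ((((hasDerivAt_neglog2sin h30 h3π).comp s (haff s _ _)).mul_const d3))
  have hdsum : d1 + d2 + d3 = 0 := by rw [hd1, hd2, hd3]; linarith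
  have hdne : ¬(d1 = 0 ∧ d2 = 0 ∧ d3 = 0) := by
    rintro ⟨h1, h2, h3⟩
    apply hxy
    rw [hd1] at h1; rw [hd2] at h2; rw [hd3] at h3
    exact Prod.ext (by linarith) (Prod.ext (by linarith) (by linarith))
  have hqneg : ∀ s ∈ Icc (0:ℝ) 1, q s < 0 := by
    intro s hs
    obtain ⟨h10, h1π⟩ := hmem1 s hs
    obtain ⟨h20, h2π⟩ := hmem2 s hs
    obtain ⟨h30, h3π⟩ := hmem3 s hs
    have hsum : (y.1 + s * d1) + (y.2.1 + s * d2) + (y.2.2 + s * d3) = π := by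
      linear_combination hys + s * hdsum
    have := cot_quad h10 h1π h20 h2π h30 h3π hsum hdsum hdne
    rw [hqdef]
    simp only
    nlinarith [this]
  have hgcc : StrictConcaveOn ℝ (Icc (0:ℝ) 1) g := by
    apply strictConcaveOn_of_deriv2_neg (convex_Icc 0 1)
    · intro s hs
      exact (hg' s hs).continuousAt.continuousWithinAt
    · intro s hs
      rw [interior_Icc] at hs
      have hev : deriv g =ᶠ[nhds s] g1 := by
        filter_upwards [isOpen_Ioo.mem_nhds hs] with u hu
        exact (hg' u (Ioo_subset_Icc_self hu)).deriv
      have h2 : deriv^[2] g s = deriv (deriv g) s := rfl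
      rw [h2, hev.deriv_eq, (hg1' s (Ioo_subset_Icc_self hs)).deriv]
      exact hqneg s (Ioo_subset_Icc_self hs)
  have h01 : (1:ℝ) ∈ Icc (0:ℝ) 1 := ⟨zero_le_one, le_refl 1⟩
  have h00 : (0:ℝ) ∈ Icc (0:ℝ) 1 := ⟨le_refl 0, zero_le_one⟩
  have hineq := hgcc.2 h01 h00 one_ne_zero ha hb hab
  simp only [smul_eq_mul, mul_one, mul_zero, add_zero] at hineq
  have hg1x : g 1 = lobachevsky x.1 + lobachevsky x.2.1 + lobachevsky x.2.2 := by
    rw [hgdef]; simp only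
    rw [hd1, hd2, hd3]; ring_nf
  have hg0y : g 0 = lobachevsky y.1 + lobachevsky y.2.1 + lobachevsky y.2.2 := by
    rw [hgdef]; simp only
    norm_num
  have hga : g a = lobachevsky (a • x + b • y).1 + lobachevsky (a • x + b • y).2.1
      + lobachevsky (a • x + b • y).2.2 := by
    rw [hgdef]
    simp only [Prod.fst_add, Prod.snd_add, Prod.smul_fst, Prod.smul_snd, smul_eq_mul]
    rw [hd1, hd2, hd3]
    have hb' : b = 1 - a := by linarith
    rw [hb']; ring_nf
  simp only [smul_eq_mul]
  rw [← hg1x, ← hg0y] at *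
  calc a * g 1 + b * g 0 < g a := hineq
    _ = _ := hga

/-- The function `V(A,B,C) = Λ(A) + Λ(B) + Λ(C)` on the simplex
`{A,B,C > 0, A+B+C = π}` is strictly concave, and its unique maximum on this set
occurs at `A = B = C = π/3`. -/
theorem ideal_tetrahedron_volume_max :
    StrictConcaveOn ℝ
      {p : ℝ × ℝ × ℝ | 0 < p.1 ∧ 0 < p.2.1 ∧ 0 < p.2.2 ∧ p.1 + p.2.1 + p.2.2 = π}
      (fun p => lobachevsky p.1 + lobachevsky p.2.1 + lobachevsky p.2.2) ∧
    ∀ p ∈ {p : ℝ × ℝ × ℝ | 0 < p.1 ∧ 0 < p.2.1 ∧ 0 < p.2.2 ∧ p.1 + p.2.1 + p.2.2 = π},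
      p ≠ (π / 3, π / 3, π / 3) →
        lobachevsky p.1 + lobachevsky p.2.1 + lobachevsky p.2.2
          < lobachevsky (π / 3) + lobachevsky (π / 3) + lobachevsky (π / 3) := by
  refine ⟨strictConcaveOn_V, ?_⟩
  intro p hp hne
  obtain ⟨h1, h2, h3, hs⟩ := hp
  have hπ : 0 < π := pi_pos
  have hσ1 : (p.2.1, p.2.2, p.1) ∈
      {p : ℝ × ℝ × ℝ | 0 < p.1 ∧ 0 < p.2.1 ∧ 0 < p.2.2 ∧ p.1 + p.2.1 + p.2.2 = π} :=
    ⟨h2, h3, h1, by linarith⟩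
  have hσ2 : (p.2.2, p.1, p.2.1) ∈
      {p : ℝ × ℝ × ℝ | 0 < p.1 ∧ 0 < p.2.1 ∧ 0 < p.2.2 ∧ p.1 + p.2.1 + p.2.2 = π} :=
    ⟨h3, h1, h2, by linarith⟩
  set m2 : ℝ × ℝ × ℝ := (1/2 : ℝ) • (p.2.1, p.2.2, p.1) + (1/2 : ℝ) • (p.2.2, p.1, p.2.1)
    with hm2
  have hm2S : m2 ∈
      {p : ℝ × ℝ × ℝ | 0 < p.1 ∧ 0 < p.2.1 ∧ 0 < p.2.2 ∧ p.1 + p.2.1 + p.2.2 = π} :=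
    simplex_convex hσ1 hσ2 (by norm_num) (by norm_num) (by norm_num)
  have hm2c : m2 = ((p.2.1 + p.2.2)/2, (p.2.2 + p.1)/2, (p.1 + p.2.1)/2) := by
    rw [hm2]
    simp only [Prod.smul_mk, Prod.mk_add_mk, smul_eq_mul]
    norm_num
    constructor <;> [skip; constructor] <;> ring
  have hpm2 : p ≠ m2 := by
    intro h
    apply hne
    rw [hm2c] at h
    have e1 : p.1 = (p.2.1 + p.2.2)/2 := congrArg Prod.fst h
    have e2 : p.2.1 = (p.2.2 + p.1)/2 := congrArg (fun z : ℝ × ℝ × ℝ => z.2.1) h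
    have : p.1 = π/3 := by linarith
    have : p.2.1 = π/3 := by linarith
    have : p.2.2 = π/3 := by linarith
    exact Prod.ext ‹p.1 = π/3› (Prod.ext ‹p.2.1 = π/3› ‹p.2.2 = π/3›)
  have hp' : p ∈
      {p : ℝ × ℝ × ℝ | 0 < p.1 ∧ 0 < p.2.1 ∧ 0 < p.2.2 ∧ p.1 + p.2.1 + p.2.2 = π} :=
    ⟨h1, h2, h3, hs⟩
  have hcomb : (1/3 : ℝ) • p + (2/3 : ℝ) • m2 = ((π/3 : ℝ), (π/3 : ℝ), (π/3 : ℝ)) := by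
    rw [hm2c]
    have : p = (p.1, p.2.1, p.2.2) := rfl
    rw [this]
    simp only [Prod.smul_mk, Prod.mk_add_mk, smul_eq_mul]
    refine congrArg₂ Prod.mk ?_ (congrArg₂ Prod.mk ?_ ?_) <;> linarith
  have hstrict := strictConcaveOn_V.2 hp' hm2S hpm2
    (by norm_num : (0:ℝ) < 1/3) (by norm_num : (0:ℝ) < 2/3) (by norm_num)
  rw [hcomb] at hstrict
  have hconc := strictConcaveOn_V.concaveOn.2 hσ1 hσ2
    (by norm_num : (0:ℝ) ≤ 1/2) (by norm_num : (0:ℝ) ≤ 1/2) (by norm_num)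
  rw [← hm2] at hconc
  simp only [smul_eq_mul] at hstrict hconc
  have hV1 : lobachevsky (p.2.1, p.2.2, p.1).1 + lobachevsky (p.2.1, p.2.2, p.1).2.1
      + lobachevsky (p.2.1, p.2.2, p.1).2.2
      = lobachevsky p.1 + lobachevsky p.2.1 + lobachevsky p.2.2 := by ring
  have hV2 : lobachevsky (p.2.2, p.1, p.2.1).1 + lobachevsky (p.2.2, p.1, p.2.1).2.1
      + lobachevsky (p.2.2, p.1, p.2.1).2.2
      = lobachevsky p.1 + lobachevsky p.2.1 + lobachevsky p.2.2 := by ring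
  rw [hV1, hV2] at hconc
  linarith
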